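/- Let A be a real symmetric n×n matrix and v ∈ ℝⁿ nonzero. If v is an eigenvector of some A_{N₁} := A - (2/N₁) v vᵀ corresponding to its smallest eigenvalue (N₁ > 0), then for every N ∈ (0, N₁], v is an eigenvector of A_N := A - (2/N) v vᵀ corresponding to its smallest eigenvalue. -/
import Mathlib

open Matrix

noncomputable def lamMin {ι : Type} [Fintype ι] (M : Matrix ι ι ℝ) : ℝ :=
  ⨅ v : {v : ι → ℝ // ∑ i, (v i) ^ 2 = 1}, (v : ι → ℝ) ⬝ᵥ (M *ᵥ (v : ι → ℝ))

lemma rayleigh_bddBelow {ι : Type} [Fintype ι] (M : Matrix ι ι ℝ) :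
    BddBelow (Set.range fun w : {v : ι → ℝ // ∑ i, (v i) ^ 2 = 1} =>
      (w : ι → ℝ) ⬝ᵥ (M *ᵥ (w : ι → ℝ))) := by
  refine ⟨-∑ i, ∑ j, |M i j|, ?_⟩
  rintro x ⟨⟨w, hw⟩, rfl⟩
  show -∑ i, ∑ j, |M i j| ≤ w ⬝ᵥ (M *ᵥ w)
  have habs : ∀ i, |w i| ≤ 1 := by
    intro i
    have h1 : (w i) ^ 2 ≤ 1 := hw ▸ Finset.single_le_sum
      (f := fun i => (w i) ^ 2) (fun _ _ => sq_nonneg _) (Finset.mem_univ i)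
    nlinarith [abs_nonneg (w i), sq_abs (w i)]
  have hrw : (w : ι → ℝ) ⬝ᵥ (M *ᵥ w) = ∑ i, ∑ j, w i * (M i j * w j) := by
    simp [dotProduct, mulVec, Finset.mul_sum]
  rw [hrw, neg_le]
  calc -∑ i, ∑ j, w i * (M i j * w j) = ∑ i, ∑ j, -(w i * (M i j * w j)) := by
        simp [Finset.sum_neg_distrib]
    _ ≤ ∑ i, ∑ j, |M i j| := by
        refine Finset.sum_le_sum fun i _ => Finset.sum_le_sum fun j _ => ?_
        have h1 := habs i; have h2 := habs j
        have : |w i * (M i j * w j)| ≤ |M i j| := by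
          rw [abs_mul, abs_mul]
          calc |w i| * (|M i j| * |w j|) ≤ 1 * (|M i j| * 1) := by
                apply mul_le_mul h1 _ (by positivity) zero_le_one
                exact mul_le_mul_of_nonneg_left h2 (abs_nonneg _)
            _ = |M i j| := by ring
        have := neg_abs_le (w i * (M i j * w j))
        linarith
  
lemma lamMin_le {ι : Type} [Fintype ι] (M : Matrix ι ι ℝ) (w : ι → ℝ)
    (hw : ∑ i, (w i) ^ 2 = 1) : lamMin M ≤ w ⬝ᵥ (M *ᵥ w) := by
  haveI : Nonempty {v : ι → ℝ // ∑ i, (v i) ^ 2 = 1} := ⟨⟨w, hw⟩⟩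
  exact ciInf_le (rayleigh_bddBelow M) ⟨w, hw⟩

lemma le_lamMin {ι : Type} [Fintype ι] (M : Matrix ι ι ℝ) (c : ℝ)
    (u : ι → ℝ) (hu : ∑ i, (u i) ^ 2 = 1)
    (h : ∀ w : ι → ℝ, ∑ i, (w i) ^ 2 = 1 → c ≤ w ⬝ᵥ (M *ᵥ w)) : c ≤ lamMin M := by
  haveI : Nonempty {v : ι → ℝ // ∑ i, (v i) ^ 2 = 1} := ⟨⟨u, hu⟩⟩
  exact le_ciInf fun ⟨w, hw⟩ => h w hw

lemma vecMulVec_mulVec' {ι : Type} [Fintype ι] (v w : ι → ℝ) :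
    vecMulVec v v *ᵥ w = (v ⬝ᵥ w) • v := by
  ext i
  simp [vecMulVec_apply, mulVec, dotProduct, Finset.mul_sum, mul_comm, mul_left_comm]

/-- if `v` is a minimal eigenvector of `A_{N₁} = A - (2/N₁) v vᵀ`,
then it is a minimal eigenvector of `A_N = A - (2/N) v vᵀ` for all `N ∈ (0, N₁]`. -/
theorem curvature_sharp_monotone {n : ℕ}
    (A : Matrix (Fin n) (Fin n) ℝ) (hA : A.IsSymm) (v : Fin n → ℝ) (hv : v ≠ 0)
    {N₁ : ℝ} (hN₁ : 0 < N₁)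
    (hsharp : (A - (2 / N₁) • vecMulVec v v) *ᵥ v
      = lamMin (A - (2 / N₁) • vecMulVec v v) • v) :
    ∀ N : ℝ, 0 < N → N ≤ N₁ →
      (A - (2 / N) • vecMulVec v v) *ᵥ v
        = lamMin (A - (2 / N) • vecMulVec v v) • v := by
  intro N hN hNle
  set B := A - (2 / N₁) • vecMulVec v v with hB
  set lam := lamMin B with hlam
  set c : ℝ := 2 / N - 2 / N₁ with hcdef
  have hc : 0 ≤ c := by
    have : 2 / N₁ ≤ 2 / N := by
      apply div_le_div_of_nonneg_left (by norm_num) hN hNle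
    simp [hcdef]; linarith
  set s : ℝ := ∑ i, (v i) ^ 2 with hs
  have hspos : 0 < s := by
    rcases Function.ne_iff.mp hv with ⟨i, hi⟩
    exact Finset.sum_pos' (fun _ _ => sq_nonneg _)
      ⟨i, Finset.mem_univ i, by nlinarith [sq_abs (v i), abs_pos.mpr hi]⟩
  have hvv : v ⬝ᵥ v = s := by simp [dotProduct, hs, sq]
  -- decomposition
  have hAN : A - (2 / N) • vecMulVec v v = B - c • vecMulVec v v := by
    rw [hB, hcdef]
    rw [sub_smul, sub_sub]
    congr 1
    module
  set μ : ℝ := lam - c * s with hμ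
  -- eigen equation
  have heig : (A - (2 / N) • vecMulVec v v) *ᵥ v = μ • v := by
    rw [hAN, sub_mulVec, smul_mulVec, vecMulVec_mulVec', hsharp, hvv, hμ]
    ext i
    simp [smul_smul, sub_mul, mul_comm]
    ring_nf
  rw [heig]
  congr 1
  -- show lamMin (A_N) = μ
  have hlower : μ ≤ lamMin (A - (2 / N) • vecMulVec v v) := by
    have hsq : ((Real.sqrt s)⁻¹) ^ 2 = s⁻¹ := by
      rw [← Real.sqrt_inv]
      exact Real.sq_sqrt (by positivity)
    have hunit : ∑ i, (((Real.sqrt s)⁻¹ • v) i) ^ 2 = 1 := by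
      simp only [Pi.smul_apply, smul_eq_mul, mul_pow, ← Finset.mul_sum]
      rw [hsq, ← hs, inv_mul_cancel₀ hspos.ne']
    apply le_lamMin _ _ _ hunit
    intro w hw
    have h1 : lam ≤ w ⬝ᵥ (B *ᵥ w) := lamMin_le B w hw
    have hray : w ⬝ᵥ ((A - (2 / N) • vecMulVec v v) *ᵥ w)
        = w ⬝ᵥ (B *ᵥ w) - c * (v ⬝ᵥ w) ^ 2 := by
      rw [hAN, sub_mulVec, dotProduct_sub, smul_mulVec, vecMulVec_mulVec']
      rw [dotProduct_smul, dotProduct_smul, smul_eq_mul, smul_eq_mul]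
      have : w ⬝ᵥ v = v ⬝ᵥ w := dotProduct_comm w v
      rw [this]; ring
    have hcs : (v ⬝ᵥ w) ^ 2 ≤ s := by
      have := Finset.sum_mul_sq_le_sq_mul_sq Finset.univ v w
      rw [hw, mul_one] at this
      simpa [dotProduct, hs] using this
    rw [hray, hμ]
    nlinarith
  have hupper : lamMin (A - (2 / N) • vecMulVec v v) ≤ μ := by
    set w₀ : Fin n → ℝ := (Real.sqrt s)⁻¹ • v with hw₀
    have hsq : ((Real.sqrt s)⁻¹) ^ 2 = s⁻¹ := by
      rw [← Real.sqrt_inv]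
      exact Real.sq_sqrt (by positivity)
    have hunit : ∑ i, (w₀ i) ^ 2 = 1 := by
      simp only [hw₀, Pi.smul_apply, smul_eq_mul, mul_pow, ← Finset.mul_sum]
      rw [hsq, ← hs, inv_mul_cancel₀ hspos.ne']
    have := lamMin_le (A - (2 / N) • vecMulVec v v) w₀ hunit
    have hval : w₀ ⬝ᵥ ((A - (2 / N) • vecMulVec v v) *ᵥ w₀) = μ := by
      rw [hw₀, mulVec_smul, dotProduct_smul, smul_dotProduct, heig]
      rw [dotProduct_smul, hvv]
      simp only [smul_eq_mul]
      rw [← mul_assoc, ← mul_assoc]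
      have h2 : (Real.sqrt s)⁻¹ * (Real.sqrt s)⁻¹ = s⁻¹ := by rw [← sq, hsq]
      rw [h2]
      field_simp
    rw [hval] at this
    exact this
  linarith
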